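/- Let φ(b) = ₁φ₁(a;b;q,z) = ∑_{n≥0} ((a;q)_n/((q;q)_n (b;q)_n)) (−1)^n q^(n(n−1)/2) z^n. Then the three-term contiguous relation (q−b)(az−b) φ(b/q) + [b(q−b) + bz − az(1+q)] φ(b) − (z(b−a)/(1−b)) φ(bq) = 0 holds. -/

import Mathlib

open scoped BigOperators

/-- q-Pochhammer infinite product `(a;q)_∞`. -/
noncomputable def qp (q a : ℂ) : ℂ := ∏' n : ℕ, (1 - a * q ^ n)

/-- q-Pochhammer `(a;q)_k`. -/
noncomputable def qpn (q a : ℂ) (k : ℕ) : ℂ := ∏ j ∈ Finset.range k, (1 - a * q ^ j)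

/-- theta function `θ(x;q) = (x;q)_∞ (q/x;q)_∞`. -/
noncomputable def theta (q x : ℂ) : ℂ := qp q x * qp q (q / x)

/-- the `₁φ₁(a;b;q,z)` series. -/
noncomputable def phi11 (q a b z : ℂ) : ℂ :=
  ∑' n : ℕ, qpn q a n / (qpn q q n * qpn q b n) * (-1) ^ n * q ^ (n * (n - 1) / 2) * z ^ n

/-- the terminating `₂φ₀(q^(-n),B;—;q,z)` series (Gasper–Rahman convention). -/
noncomputable def phi20 (q : ℂ) (n : ℕ) (B z : ℂ) : ℂ :=
  ∑ k ∈ Finset.range (n + 1),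
    qpn q ((q ^ n)⁻¹) k * qpn q B k / qpn q q k * (-1) ^ k * (q ^ (k * (k - 1) / 2))⁻¹ * z ^ k

/- ### Auxiliary material for the contiguous relation -/

open Filter

/-- the general term of the `₁φ₁` series. -/
noncomputable def ct (q a b z : ℂ) (n : ℕ) : ℂ :=
  qpn q a n / (qpn q q n * qpn q b n) * (-1) ^ n * q ^ (n * (n - 1) / 2) * z ^ n

lemma phi11_eq_tsum_ct (q a b z : ℂ) : phi11 q a b z = ∑' n, ct q a b z n := rfl

lemma qpn_succ (q x : ℂ) (n : ℕ) : qpn q x (n + 1) = qpn q x n * (1 - x * q ^ n) :=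
  Finset.prod_range_succ _ _

lemma qpn_succ' (q x : ℂ) (n : ℕ) : qpn q x (n + 1) = (1 - x) * qpn q (x * q) n := by
  rw [qpn, Finset.prod_range_succ']
  simp only [pow_zero, mul_one]
  rw [mul_comm]
  congr 1
  refine Finset.prod_congr rfl fun j _ => ?_
  ring_nf

lemma qpn_ne_zero {q x : ℂ} (h : ∀ j : ℕ, (1 : ℂ) - x * q ^ j ≠ 0) (k : ℕ) :
    qpn q x k ≠ 0 :=
  Finset.prod_ne_zero_iff.mpr fun j _ => h j

lemma tri_succ' (n : ℕ) : (n + 1) * (n + 1 - 1) / 2 = n * (n - 1) / 2 + n := by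
  simp only [Nat.add_sub_cancel]
  have h1 : (n + 1).choose 2 = (n + 1) * n / 2 := by
    rw [Nat.choose_two_right]; simp
  rw [← h1, Nat.choose_succ_succ, Nat.choose_one_right, Nat.choose_two_right, Nat.add_comm]

lemma ct_rec (q : ℂ) (a x z : ℂ) (hG : ∀ k, qpn q q k ≠ 0) (hP : ∀ k, qpn q x k ≠ 0)
    (n : ℕ) :
    ct q a x z (n + 1) = ct q a x z n *
      ((1 - a * q ^ n) * (-1) * q ^ n * z / ((1 - q * q ^ n) * (1 - x * q ^ n))) := by
  have hGn := hG n
  have hPn := hP n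
  have hGf : (1 : ℂ) - q * q ^ n ≠ 0 := by
    have := hG (n + 1)
    rw [qpn_succ] at this
    exact right_ne_zero_of_mul this
  have hPf : (1 : ℂ) - x * q ^ n ≠ 0 := by
    have := hP (n + 1)
    rw [qpn_succ] at this
    exact right_ne_zero_of_mul this
  simp only [ct, qpn_succ, tri_succ', pow_add, pow_succ]
  field_simp

lemma summable_ct (q : ℝ) (hq0 : 0 < q) (hq1 : q < 1) (a x z : ℂ)
    (hG : ∀ k, qpn (q : ℂ) (q : ℂ) k ≠ 0) (hP : ∀ k, qpn (q : ℂ) x k ≠ 0) :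
    Summable (ct (q : ℂ) a x z) := by
  have hQn : ‖(q : ℂ)‖ < 1 := by
    rw [Complex.norm_real, Real.norm_eq_abs]; rwa [abs_of_pos hq0]
  have hpow : Tendsto (fun n : ℕ => ((q : ℂ)) ^ n) atTop (nhds 0) :=
    tendsto_pow_atTop_nhds_zero_of_norm_lt_one hQn
  set f : ℂ → ℂ := fun w => (1 - a * w) * (-1) * w * z / ((1 - (q : ℂ) * w) * (1 - x * w))
    with hf
  have hcont : ContinuousAt f 0 := by
    apply ContinuousAt.div
    · fun_prop
    · fun_prop
    · norm_num
  have hρ : Tendsto (fun n : ℕ => f ((q : ℂ) ^ n)) atTop (nhds 0) := by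
    have h := hcont.tendsto.comp hpow
    have : f 0 = 0 := by simp [hf]
    rwa [this] at h
  have hev : ∀ᶠ n : ℕ in atTop, ‖f ((q : ℂ) ^ n)‖ ≤ 1 / 2 := by
    have := hρ.norm
    simp only [norm_zero] at this
    exact this.eventually_le_const (by norm_num)
  have hev2 : ∀ᶠ n : ℕ in atTop,
      ‖ct (q : ℂ) a x z (n + 1)‖ ≤ (1 / 2 : ℝ) * ‖ct (q : ℂ) a x z n‖ := by
    filter_upwards [hev] with n hn
    rw [ct_rec (q : ℂ) a x z hG hP n, norm_mul, mul_comm]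
    exact mul_le_mul_of_nonneg_right hn (norm_nonneg _)
  exact summable_of_ratio_norm_eventually_le (by norm_num) hev2

set_option maxHeartbeats 1000000 in
lemma key_identity (q a b z : ℂ) (hQ0 : q ≠ 0)
    (hG : ∀ k, qpn q q k ≠ 0) (hP : ∀ k, qpn q b k ≠ 0)
    (h1b : (1 : ℂ) - b ≠ 0) (hqb : q - b ≠ 0)
    (hbdq : ∀ j : ℕ, (1 : ℂ) - b / q * q ^ j ≠ 0) (n : ℕ) :
    (q - b) * (a * z - b) * ct q a (b / q) z n +
      (b * (q - b) + b * z - a * z * (1 + q)) * ct q a b z n -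
      z * (b - a) / (1 - b) * ct q a (b * q) z n
    = b ^ 2 * (ct q a b z (n + 1) * (1 - q ^ (n + 1)) - ct q a b z n * (1 - q ^ n)) := by
  have hXf : q - b * q ^ n ≠ 0 := by
    have h := hbdq n
    intro hc
    apply h
    rw [sub_eq_zero] at hc ⊢
    field_simp
    exact hc
  have hX : qpn q (b / q) n = (q - b) * qpn q b n / (q - b * q ^ n) := by
    rw [eq_div_iff hXf]
    have h2 := qpn_succ' q (b / q) n
    rw [div_mul_cancel₀ _ hQ0] at h2
    have h3 := (qpn_succ q (b / q) n).symm.trans h2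
    calc qpn q (b / q) n * (q - b * q ^ n)
        = qpn q (b / q) n * (1 - b / q * q ^ n) * q := by
          field_simp
      _ = (1 - b / q) * qpn q b n * q := by rw [h3]
      _ = (q - b) * qpn q b n := by
          field_simp
  have hY : qpn q (b * q) n = qpn q b n * (1 - b * q ^ n) / (1 - b) := by
    rw [eq_div_iff h1b, mul_comm]
    exact (qpn_succ' q b n).symm.trans (qpn_succ q b n)
  have hGf : (1 : ℂ) - q * q ^ n ≠ 0 := by
    have := hG (n + 1); rw [qpn_succ] at this; exact right_ne_zero_of_mul this
  have hPf : (1 : ℂ) - b * q ^ n ≠ 0 := by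
    have := hP (n + 1); rw [qpn_succ] at this; exact right_ne_zero_of_mul this
  have hGn := hG n
  have hPn := hP n
  have c1 : ct q a (b / q) z n =
      qpn q a n * (-1) ^ n * q ^ (n * (n - 1) / 2) * z ^ n * (q - b * q ^ n) /
        (qpn q q n * qpn q b n * (q - b)) := by
    rw [ct, hX]
    field_simp
  have c2 : ct q a b z n =
      qpn q a n * (-1) ^ n * q ^ (n * (n - 1) / 2) * z ^ n / (qpn q q n * qpn q b n) := by
    rw [ct]
    field_simp
  have c3 : ct q a (b * q) z n =
      qpn q a n * (-1) ^ n * q ^ (n * (n - 1) / 2) * z ^ n * (1 - b) /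
        (qpn q q n * qpn q b n * (1 - b * q ^ n)) := by
    rw [ct, hY]
    field_simp
  have c4 : ct q a b z (n + 1) =
      qpn q a n * (1 - a * q ^ n) * (-1) ^ n * (-1) * q ^ (n * (n - 1) / 2) * q ^ n * z ^ n * z /
        (qpn q q n * (1 - q * q ^ n) * (qpn q b n * (1 - b * q ^ n))) := by
    rw [ct, qpn_succ, qpn_succ, qpn_succ, tri_succ', pow_add, pow_succ, pow_succ]
    field_simp
    ring
  have hGP : qpn q q n * qpn q b n ≠ 0 := mul_ne_zero hGn hPn
  have hd1 : qpn q q n * qpn q b n * (q - b) ≠ 0 := mul_ne_zero hGP hqb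
  have hd3 : (1 - b) * (qpn q q n * qpn q b n * (1 - b * q ^ n)) ≠ 0 :=
    mul_ne_zero h1b (mul_ne_zero hGP hPf)
  have hd4 : qpn q q n * (1 - q * q ^ n) * (qpn q b n * (1 - b * q ^ n)) ≠ 0 :=
    mul_ne_zero (mul_ne_zero hGn hGf) (mul_ne_zero hPn hPf)
  rw [c1, c2, c3, c4, pow_succ]
  rw [div_mul_div_comm]
  simp only [div_mul_eq_mul_div]
  simp only [← mul_div_assoc]
  rw [div_add_div _ _ hd1 hGP, div_sub_div _ _ (mul_ne_zero hd1 hGP) hd3,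
    div_sub_div _ _ hd4 hGP, ← mul_div_assoc, div_eq_div_iff (mul_ne_zero (mul_ne_zero hd1 hGP) hd3)
      (mul_ne_zero hd4 hGP)]
  ring

/-- three-term contiguous relation for `₁φ₁(a;b;q,z)` in the parameter `b`. -/
theorem phi11_contiguous (q : ℝ) (hq0 : 0 < q) (hq1 : q < 1) (a b z : ℂ)
    (hb : ∀ n : ℕ, b ≠ (((q : ℂ)) ^ n)⁻¹) (hbq : b ≠ (q : ℂ)) :
    ((q : ℂ) - b) * (a * z - b) * phi11 (q : ℂ) a (b / q) z +
        (b * ((q : ℂ) - b) + b * z - a * z * (1 + (q : ℂ))) * phi11 (q : ℂ) a b z -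
        z * (b - a) / (1 - b) * phi11 (q : ℂ) a (b * q) z = 0 := by
  have hQ0 : (q : ℂ) ≠ 0 := Complex.ofReal_ne_zero.mpr hq0.ne'
  have hQn : ‖(q : ℂ)‖ < 1 := by
    rw [Complex.norm_real, Real.norm_eq_abs]; rwa [abs_of_pos hq0]
  have hqf : ∀ j : ℕ, (1 : ℂ) - (q : ℂ) * (q : ℂ) ^ j ≠ 0 := by
    intro j
    rw [sub_ne_zero]
    intro hc
    have h1 : q * q ^ j < 1 := by
      have h2 : q ^ j ≤ 1 := pow_le_one₀ hq0.le hq1.le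
      nlinarith
    have hc' : ((1 : ℝ) : ℂ) = ((q * q ^ j : ℝ) : ℂ) := by push_cast; exact hc
    have := Complex.ofReal_injective hc'
    linarith
  have hbf : ∀ j : ℕ, (1 : ℂ) - b * (q : ℂ) ^ j ≠ 0 := by
    intro j
    rw [sub_ne_zero]
    intro hc
    exact hb j (eq_inv_of_mul_eq_one_left (by linear_combination -hc))
  have hbqf : ∀ j : ℕ, (1 : ℂ) - b * (q : ℂ) * (q : ℂ) ^ j ≠ 0 := by
    intro j
    have h := hbf (j + 1)
    rw [pow_succ] at h
    rwa [show b * (q : ℂ) * (q : ℂ) ^ j = b * ((q : ℂ) ^ j * (q : ℂ)) by ring]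
  have hbdqf : ∀ j : ℕ, (1 : ℂ) - b / (q : ℂ) * (q : ℂ) ^ j ≠ 0 := by
    intro j
    cases j with
    | zero =>
        simp only [pow_zero, mul_one]
        rw [sub_ne_zero]
        intro hc
        apply hbq
        rw [eq_comm, div_eq_one_iff_eq hQ0] at hc
        exact hc
    | succ m =>
        rw [show b / (q : ℂ) * (q : ℂ) ^ (m + 1) = b * (q : ℂ) ^ m by
          rw [pow_succ]; field_simp]
        exact hbf m
  have h1b : (1 : ℂ) - b ≠ 0 := by simpa using hbf 0
  have hqb : (q : ℂ) - b ≠ 0 := sub_ne_zero.mpr (Ne.symm hbq)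
  have hG : ∀ k, qpn (q : ℂ) (q : ℂ) k ≠ 0 := qpn_ne_zero hqf
  have hP : ∀ k, qpn (q : ℂ) b k ≠ 0 := qpn_ne_zero hbf
  have hPq : ∀ k, qpn (q : ℂ) (b * (q : ℂ)) k ≠ 0 := qpn_ne_zero hbqf
  have hPdq : ∀ k, qpn (q : ℂ) (b / (q : ℂ)) k ≠ 0 := qpn_ne_zero hbdqf
  have S1 : Summable (ct (q : ℂ) a (b / (q : ℂ)) z) := summable_ct q hq0 hq1 a _ z hG hPdq
  have S2 : Summable (ct (q : ℂ) a b z) := summable_ct q hq0 hq1 a _ z hG hP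
  have S3 : Summable (ct (q : ℂ) a (b * (q : ℂ)) z) := summable_ct q hq0 hq1 a _ z hG hPq
  have key := key_identity (q : ℂ) a b z hQ0 hG hP h1b hqb hbdqf
  rw [phi11_eq_tsum_ct, phi11_eq_tsum_ct, phi11_eq_tsum_ct,
    ← tsum_mul_left, ← tsum_mul_left, ← tsum_mul_left,
    ← Summable.tsum_add (S1.mul_left _) (S2.mul_left _),
    ← Summable.tsum_sub ((S1.mul_left _).add (S2.mul_left _)) (S3.mul_left _)]
  have hsummable : Summable (fun n => b ^ 2 *
      (ct (q : ℂ) a b z (n + 1) * (1 - (q : ℂ) ^ (n + 1)) -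
        ct (q : ℂ) a b z n * (1 - (q : ℂ) ^ n))) := by
    apply Summable.congr (((S1.mul_left _).add (S2.mul_left _)).sub (S3.mul_left _))
    intro n
    exact key n
  have hps : ∀ N : ℕ, ∑ i ∈ Finset.range N, b ^ 2 *
      (ct (q : ℂ) a b z (i + 1) * (1 - (q : ℂ) ^ (i + 1)) -
        ct (q : ℂ) a b z i * (1 - (q : ℂ) ^ i))
      = b ^ 2 * (ct (q : ℂ) a b z N * (1 - (q : ℂ) ^ N)) := by
    intro N
    rw [← Finset.mul_sum,
      Finset.sum_range_sub (fun i => ct (q : ℂ) a b z i * (1 - (q : ℂ) ^ i))]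
    simp
  have hlim : Tendsto (fun N : ℕ => b ^ 2 * (ct (q : ℂ) a b z N * (1 - (q : ℂ) ^ N)))
      atTop (nhds 0) := by
    have h1 : Tendsto (ct (q : ℂ) a b z) atTop (nhds 0) := S2.tendsto_atTop_zero
    have h2 : Tendsto (fun N : ℕ => 1 - (q : ℂ) ^ N) atTop (nhds (1 - 0)) :=
      tendsto_const_nhds.sub (tendsto_pow_atTop_nhds_zero_of_norm_lt_one hQn)
    have h3 := (h1.mul h2).const_mul (b ^ 2)
    simpa using h3
  have hzero : HasSum (fun n => b ^ 2 *
      (ct (q : ℂ) a b z (n + 1) * (1 - (q : ℂ) ^ (n + 1)) -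
        ct (q : ℂ) a b z n * (1 - (q : ℂ) ^ n))) 0 := by
    rw [Summable.hasSum_iff_tendsto_nat hsummable]
    exact Tendsto.congr (fun N => (hps N).symm) hlim
  rw [tsum_congr key]
  exact hzero.tsum_eq
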